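/- For every n ≥ 1 with 2^{k-1} < n ≤ 2^k (k ≥ 1), the initial non-repetitive complexity of the Thue–Morse word satisfies inrc_m(n) = 3·2^{k-1}. -/

import Mathlib

/-- The Thue–Morse word: `tm i` is the parity of the binary digit sum of `i`. -/
def tm (i : ℕ) : ℕ := (Nat.digits 2 i).sum % 2

/-- The set of `m` such that the first `m` length-`n` factors of `x`
(starting at positions 0, …, m−1) are pairwise distinct.  The initial
non-repetitive complexity `inrc x n` is the greatest element of this set. -/
def inrcSet {α : Type*} (x : ℕ → α) (n : ℕ) : Set ℕ :=
  {m | ∀ i < m, ∀ j < m, (∀ d < n, x (i + d) = x (j + d)) → i = j}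

lemma tm_lt_two (t : ℕ) : tm t < 2 := Nat.mod_lt _ (by norm_num)

lemma tm_even (t : ℕ) : tm (2 * t) = tm t := by
  rcases Nat.eq_zero_or_pos t with h | h
  · simp [h]
  · unfold tm
    rw [Nat.digits_def' (by norm_num : 1 < 2) (by omega)]
    simp [Nat.mul_div_cancel_left _ (by norm_num : 0 < 2), Nat.mul_mod_right]

lemma tm_odd (t : ℕ) : tm (2 * t + 1) = 1 - tm t := by
  unfold tm
  rw [Nat.digits_def' (by norm_num : 1 < 2) (by omega)]
  have h1 : (2 * t + 1) % 2 = 1 := by omega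
  have h2 : (2 * t + 1) / 2 = t := by omega
  rw [h1, h2]
  simp only [List.sum_cons]
  have := Nat.mod_lt ((Nat.digits 2 t).sum) (show 0 < 2 by norm_num)
  omega

lemma tm_no_three (t : ℕ) (h1 : tm t = tm (t + 1)) (h2 : tm (t + 1) = tm (t + 2)) :
    False := by
  rcases Nat.even_or_odd t with ⟨s, hs⟩ | ⟨s, hs⟩
  · subst hs
    rw [show s + s = 2 * s by ring] at h1
    rw [show 2 * s + 1 = 2 * s + 1 by ring] at h1
    rw [tm_even, tm_odd] at h1
    have := tm_lt_two s; omega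
  · subst hs
    rw [show 2 * s + 1 + 1 = 2 * (s+1) by ring, show 2 * s + 1 + 2 = 2 * (s+1) + 1 by ring,
      tm_even, tm_odd] at h2
    have := tm_lt_two (s + 1); omega

lemma tm_parity_aux (a b : ℕ) (h : ∀ d < 4, tm (2 * a + d) = tm (2 * b + 1 + d)) :
    False := by
  have e0 := h 0 (by norm_num)
  have e1 := h 1 (by norm_num)
  have e2 := h 2 (by norm_num)
  have e3 := h 3 (by norm_num)
  rw [show 2*a+0 = 2*a by ring, show 2*b+1+0 = 2*b+1 by ring, tm_even, tm_odd] at e0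
  rw [show 2*b+1+1 = 2*(b+1) by ring, tm_odd, tm_even] at e1
  rw [show 2*a+2 = 2*(a+1) by ring, show 2*b+1+2 = 2*(b+1)+1 by ring, tm_even, tm_odd] at e2
  rw [show 2*a+3 = 2*(a+1)+1 by ring, show 2*b+1+3 = 2*(b+2) by ring, tm_odd, tm_even] at e3
  have l1 := tm_lt_two a; have l2 := tm_lt_two b; have l3 := tm_lt_two (a+1)
  have l4 := tm_lt_two (b+1); have l5 := tm_lt_two (b+2)
  exact tm_no_three b (by omega) (by omega)

lemma tm_parity (i j : ℕ) (h : ∀ d < 4, tm (i + d) = tm (j + d)) : i % 2 = j % 2 := by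
  by_contra hne
  rcases Nat.even_or_odd i with ⟨a, ha⟩ | ⟨a, ha⟩ <;>
    rcases Nat.even_or_odd j with ⟨b, hb⟩ | ⟨b, hb⟩
  · omega
  · exact tm_parity_aux a b (by
      intro d hd
      rw [show 2*a+d = i+d by omega, show 2*b+1+d = j+d by omega]; exact h d hd)
  · exact tm_parity_aux b a (by
      intro d hd
      rw [show 2*b+d = j+d by omega, show 2*a+1+d = i+d by omega]; exact (h d hd).symm)
  · omega

lemma tm_add_pow : ∀ (j a m : ℕ), a < 2 ^ j → tm (a + 2 ^ j * m) = (tm a + tm m) % 2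
  | 0, a, m, ha => by
    interval_cases a
    simp [show tm 0 = 0 by norm_num [tm], Nat.mod_eq_of_lt (tm_lt_two m)]
  | (j+1), a, m, ha => by
    rcases Nat.even_or_odd a with ⟨q, hq⟩ | ⟨q, hq⟩
    · have hq2 : q < 2 ^ j := by rw [pow_succ] at ha; omega
      have : a + 2 ^ (j+1) * m = 2 * (q + 2 ^ j * m) := by rw [pow_succ]; ring_nf; omega
      rw [this, tm_even, tm_add_pow j q m hq2, show a = 2*q by omega, tm_even]
    · have hq2 : q < 2 ^ j := by rw [pow_succ] at ha; omega
      have : a + 2 ^ (j+1) * m = 2 * (q + 2 ^ j * m) + 1 := by rw [pow_succ]; ring_nf; omega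
      rw [this, tm_odd, tm_add_pow j q m hq2, show a = 2*q+1 by omega, tm_odd]
      have := tm_lt_two q; have := tm_lt_two m; omega

lemma tm_rep (k d : ℕ) (hk : 1 ≤ k) (hd : d < 2 ^ k) :
    tm d = tm (3 * 2 ^ (k - 1) + d) := by
  set N := 2 ^ (k - 1) with hN
  have hNk : 2 ^ k = 2 * N := by
    rw [hN, ← pow_succ']; congr 1; omega
  have h3 : tm 3 = 0 := by norm_num [tm]
  have h1 : tm 1 = 1 := by norm_num [tm]
  have h4 : tm 4 = 1 := by norm_num [tm]
  rcases lt_or_ge d N with h | h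
  · rw [show 3 * N + d = d + 2 ^ (k-1) * 3 by omega, tm_add_pow (k-1) d 3 h, h3]
    have := tm_lt_two d; omega
  · obtain ⟨e, rfl⟩ := Nat.exists_eq_add_of_le h
    have he : e < 2 ^ (k - 1) := by omega
    have e1 : tm (3 * N + (N + e)) = (tm e + tm 4) % 2 := by
      rw [show 3 * N + (N + e) = e + 2 ^ (k-1) * 4 by omega]
      exact tm_add_pow (k-1) _ 4 he
    have e2 : tm (N + e) = (tm e + tm 1) % 2 := by
      rw [show N + e = e + 2 ^ (k-1) * 1 by omega]
      exact tm_add_pow (k-1) _ 1 he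
    rw [e1, e2, h1, h4]

lemma tmQ : ∀ (k i j : ℕ), i < j → j < 3 * 2 ^ k →
    (∀ d ≤ 2 ^ k, tm (i + d) = tm (j + d)) → False
  | 0, i, j, hij, hj, h => by
    norm_num at hj
    interval_cases j <;> interval_cases i <;>
      (have h0 := h 0 (by norm_num); have h1 := h 1 (by norm_num);
       norm_num [tm] at h0 <;> norm_num [tm] at h1)
  | 1, i, j, hij, hj, h => by
    norm_num at hj
    interval_cases j <;> interval_cases i <;>
      (have h0 := h 0 (by norm_num); have h1 := h 1 (by norm_num);
       have h2 := h 2 (by norm_num); norm_num [tm] at h0 <;> norm_num [tm] at h1 <;> norm_num [tm] at h2)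
  | (k+2), i, j, hij, hj, h => by
    have hpow : 2 ^ (k+2) = 2 * 2 ^ (k+1) := by ring
    have hpos : 0 < 2 ^ (k+1) := Nat.pow_pos (by norm_num)
    have hge4 : 4 ≤ 2 ^ (k+2) := by
      calc 4 = 2^2 := by norm_num
      _ ≤ 2^(k+2) := Nat.pow_le_pow_right (by norm_num) (by omega)
    have hpar := tm_parity i j (fun d hd => h d (by omega))
    rcases Nat.even_or_odd i with ⟨a, ha⟩ | ⟨a, ha⟩
    · obtain ⟨b, hb⟩ : ∃ b, j = 2 * b := ⟨j / 2, by omega⟩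
      refine tmQ (k+1) a b (by omega) (by omega) (fun d hd => ?_)
      have := h (2*d) (by omega)
      rwa [show i + 2*d = 2 * (a+d) by omega, show j + 2*d = 2 * (b+d) by omega,
        tm_even, tm_even] at this
    · obtain ⟨b, hb⟩ : ∃ b, j = 2 * b + 1 := ⟨j / 2, by omega⟩
      refine tmQ (k+1) a b (by omega) (by omega) (fun d hd => ?_)
      have := h (2*d) (by omega)
      rw [show i + 2*d = 2 * (a+d) + 1 by omega, show j + 2*d = 2 * (b+d) + 1 by omega,
        tm_odd, tm_odd] at this
      have := tm_lt_two (a+d); have := tm_lt_two (b+d); omega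

/-- if 2^{k-1} < n ≤ 2^k with k ≥ 1, then inrc_m(n) = 3·2^{k-1}. -/
theorem inrc_thueMorse (k n : ℕ) (hk : 1 ≤ k) (hn1 : 2 ^ (k - 1) < n)
    (hn2 : n ≤ 2 ^ k) :
    IsGreatest (inrcSet tm n) (3 * 2 ^ (k - 1)) := by
  constructor
  · intro i hi j hj hw
    by_contra hne
    rcases lt_trichotomy i j with hlt | heq | hgt
    · exact tmQ (k-1) i j hlt hj (fun d hd => hw d (by omega))
    · exact hne heq
    · exact tmQ (k-1) j i hgt hi (fun d hd => (hw d (by omega)).symm)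
  · intro m hm
    by_contra hlt
    push_neg at hlt
    have hp : 0 < 2 ^ (k-1) := Nat.pow_pos (by norm_num)
    have := hm 0 (by omega) (3 * 2 ^ (k-1)) (by omega)
      (fun d hd => by simpa using tm_rep k d hk (by omega))
    omega
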